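/- Let (R, m) be a finite commutative local ring with m² ≠ 0 and |R/m| ≥ 3. Then the zero-divisor graph Γ(R) contains K_{2,3} as a subgraph; more precisely, if k is the least integer with m^k = 0, then |m^{k-1} − {0}| ≥ 2 and |m^{k-2} − m^{k-1}| ≥ 6, and every element of m^{k-1} − {0} annihilates every element of m^{k-2} − m^{k-1}. -/

import Mathlib

open SimpleGraph Function

/-- The zero-divisor graph of a commutative ring, defined on the whole ring
(elements that are not nonzero zero-divisors are isolated vertices). -/
def zdg (R : Type*) [CommRing R] : SimpleGraph R where
  Adj x y := x ≠ y ∧ x ≠ 0 ∧ y ≠ 0 ∧ x * y = 0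
  symm := by
    constructor
    rintro x y ⟨h1, h2, h3, h4⟩
    exact ⟨fun e => h1 e.symm, h3, h2, by rwa [mul_comm]⟩
  loopless := by constructor; rintro x ⟨h1, _⟩; exact h1 rfl

/-- Let `(R, m)` be a finite local ring with `m² ≠ 0` and `|R/m| ≥ 3`, and let `k` be the
least integer with `m^k = 0`. Then `|m^{k-1} − {0}| ≥ 2`, `|m^{k-2} − m^{k-1}| ≥ 6`, every
element of `m^{k-1} − {0}` annihilates every element of `m^{k-2} − m^{k-1}`, and `K_{2,3}`
is a subgraph of `Γ(R)`. -/
theorem stmt_7 (R : Type*) [CommRing R] [IsLocalRing R] [Finite R]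
    (hm2 : (IsLocalRing.maximalIdeal R) ^ 2 ≠ ⊥)
    (hcard : 3 ≤ Nat.card (R ⧸ IsLocalRing.maximalIdeal R))
    (k : ℕ) (hk : (IsLocalRing.maximalIdeal R) ^ k = ⊥)
    (hkleast : ∀ j < k, (IsLocalRing.maximalIdeal R) ^ j ≠ ⊥) :
    2 ≤ Nat.card {x : R | x ∈ (IsLocalRing.maximalIdeal R) ^ (k - 1) ∧ x ≠ 0} ∧
    6 ≤ Nat.card {x : R | x ∈ (IsLocalRing.maximalIdeal R) ^ (k - 2) ∧
          x ∉ (IsLocalRing.maximalIdeal R) ^ (k - 1)} ∧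
    (∀ u ∈ (IsLocalRing.maximalIdeal R) ^ (k - 1), u ≠ 0 →
      ∀ v ∈ (IsLocalRing.maximalIdeal R) ^ (k - 2),
        v ∉ (IsLocalRing.maximalIdeal R) ^ (k - 1) → u * v = 0) ∧
    ∃ f : completeBipartiteGraph (Fin 2) (Fin 3) →g zdg R, Injective f := by
  set M := IsLocalRing.maximalIdeal R with hMdef
  -- k ≥ 3
  have hk3 : 3 ≤ k := by
    by_contra h
    push_neg at h
    have hle : M ^ 2 ≤ M ^ k := Ideal.pow_le_pow_right (by omega)
    rw [hk] at hle
    exact hm2 (le_bot_iff.mp hle)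
  have hkm1 : M ^ (k - 1) ≠ ⊥ := hkleast _ (by omega)
  -- unit cancellation in ideals
  have hid : ∀ {a b : R} {I : Ideal R}, IsUnit a → a * b ∈ I → b ∈ I := by
    rintro a b I ⟨u, rfl⟩ h
    have h2 := I.mul_mem_left (↑u⁻¹) h
    rwa [← mul_assoc, Units.inv_mul, one_mul] at h2
  have hu_mul_ne : ∀ {a b : R}, IsUnit a → b ≠ 0 → a * b ≠ 0 := by
    intro a b ha hb h
    exact hb (ha.mul_right_eq_zero.mp h)
  -- get x ∈ M^(k-1), x ≠ 0
  obtain ⟨x, hxmem, hx0⟩ := Submodule.exists_mem_ne_zero_of_ne_bot hkm1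
  -- get c with c, c-1 units
  obtain ⟨cbar, hc0, hc1⟩ : ∃ z : R ⧸ M, z ≠ 0 ∧ z ≠ 1 := by
    by_contra h
    push_neg at h
    have hsub : (Set.univ : Set (R ⧸ M)) ⊆ {0, 1} := by
      intro z _
      rcases eq_or_ne z 0 with h0 | h0
      · exact Or.inl h0
      · exact Or.inr (h z h0)
    have h2 := Set.ncard_le_ncard hsub (Set.toFinite _)
    rw [Set.ncard_univ] at h2
    have h3 : ({0, 1} : Set (R ⧸ M)).ncard ≤ 2 := by
      have : ({0, 1} : Set (R ⧸ M)).ncard ≤ ({1} : Set (R ⧸ M)).ncard + 1 :=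
        Set.ncard_insert_le (0 : R ⧸ M) ({1} : Set (R ⧸ M))
      rw [Set.ncard_singleton] at this
      exact this
    omega
  obtain ⟨c, rfl⟩ := Ideal.Quotient.mk_surjective cbar
  have hcu : IsUnit c := by
    have hcm : c ∉ M := fun h => hc0 (Ideal.Quotient.eq_zero_iff_mem.mpr h)
    rwa [IsLocalRing.mem_maximalIdeal, mem_nonunits_iff, not_not] at hcm
  have hc1u : IsUnit (c - 1) := by
    have hcm : c - 1 ∉ M := by
      intro h
      apply hc1
      have : Ideal.Quotient.mk M (c - 1) = 0 := Ideal.Quotient.eq_zero_iff_mem.mpr h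
      rw [map_sub, map_one, sub_eq_zero] at this
      exact this
    rwa [IsLocalRing.mem_maximalIdeal, mem_nonunits_iff, not_not] at hcm
  -- facts about x, c*x
  have hcxmem : c * x ∈ M ^ (k - 1) := Ideal.mul_mem_left _ _ hxmem
  have hcx0 : c * x ≠ 0 := hu_mul_ne hcu hx0
  have hcxx : c * x ≠ x := by
    intro h
    apply hu_mul_ne hc1u hx0
    rw [sub_mul, one_mul, h, sub_self]
  -- get y ∈ M^(k-2) \ M^(k-1)
  have hlt : M ^ (k - 1) < M ^ (k - 2) := by
    refine lt_of_le_of_ne (Ideal.pow_le_pow_right (by omega)) ?_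
    intro heq
    apply hkm1
    calc M ^ (k - 1) = M ^ (k - 2) * M := by rw [← pow_succ]; congr 1; omega
      _ = M ^ (k - 1) * M := by rw [heq]
      _ = M ^ k := by rw [← pow_succ]; congr 1; omega
      _ = ⊥ := hk
  obtain ⟨y, hymem, hy1⟩ := SetLike.exists_of_lt hlt
  have hcymem : c * y ∈ M ^ (k - 2) := Ideal.mul_mem_left _ _ hymem
  have hcy1 : c * y ∉ M ^ (k - 1) := fun h => hy1 (hid hcu h)
  -- annihilation
  have hann : ∀ u ∈ M ^ (k - 1), ∀ v ∈ M ^ (k - 2), u * v = 0 := by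
    intro u hu v hv
    have h1 : u * v ∈ M ^ (k - 1) * M ^ (k - 2) := Ideal.mul_mem_mul hu hv
    have h2 : M ^ (k - 1) * M ^ (k - 2) ≤ M ^ k := by
      rw [← pow_add]; exact Ideal.pow_le_pow_right (by omega)
    have h3 := h2 h1
    rw [hk] at h3
    exact (Submodule.mem_bot R).mp h3
  -- cross-coset distinctness
  have hAB : ∀ b1 ∈ M ^ (k - 1), ∀ b2 ∈ M ^ (k - 1), y + b1 ≠ c * y + b2 := by
    intro b1 hb1 b2 hb2 h
    apply hy1
    apply hid hc1u (I := M ^ (k - 1))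
    have he : (c - 1) * y = b1 - b2 := by linear_combination -h
    rw [he]
    exact Submodule.sub_mem _ hb1 hb2
  -- the b-family
  set b : Fin 3 → R := ![0, x, c * x] with hbdef
  have hbmem : ∀ j, b j ∈ M ^ (k - 1) := by
    intro j
    fin_cases j <;> simp [hbdef, hxmem, hcxmem]
  have hbinj : Injective b := by
    intro j j' h
    simp only [hbdef] at h
    fin_cases j <;> fin_cases j' <;> simp at h ⊢ <;>
      first
        | rfl
        | exact absurd h hx0.symm
        | exact absurd h hx0
        | exact absurd h hcx0.symm
        | exact absurd h hcx0
        | exact absurd h hcxx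
        | exact absurd h.symm hcxx
  -- the g-family
  set g : Fin 2 → R := ![y, c * y] with hgdef
  have hgmem : ∀ i, g i ∈ M ^ (k - 2) := by
    intro i; fin_cases i <;> simp [hgdef, hymem, hcymem]
  have hgnot : ∀ i, g i ∉ M ^ (k - 1) := by
    intro i; fin_cases i <;> simp [hgdef, hy1, hcy1]
  -- elements g i + b j of M^(k-2) \ M^(k-1)
  have hvmem : ∀ i j, g i + b j ∈ M ^ (k - 2) := fun i j =>
    Submodule.add_mem _ (hgmem i) ((Ideal.pow_le_pow_right (by omega) : M ^ (k-1) ≤ M ^ (k-2)) (hbmem j))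
  have hvnot : ∀ i j, g i + b j ∉ M ^ (k - 1) := by
    intro i j h
    apply hgnot i
    have := Submodule.sub_mem _ h (hbmem j)
    simpa using this
  have hvinj : ∀ i j i' j', g i + b j = g i' + b j' → i = i' ∧ j = j' := by
    intro i j i' j' h
    have hii : i = i' := by
      by_contra hne
      simp only [hgdef] at h
      fin_cases i <;> fin_cases i' <;> simp at h ⊢ <;>
        first
          | exact hne rfl
          | exact hAB _ (hbmem j) _ (hbmem j') h
          | exact hAB _ (hbmem j') _ (hbmem j) h.symm
    subst hii
    exact ⟨rfl, hbinj (add_left_cancel h)⟩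
  -- the u-family
  set u : Fin 2 → R := ![x, c * x] with hudef
  have humem : ∀ i, u i ∈ M ^ (k - 1) := by
    intro i; fin_cases i <;> simp [hudef, hxmem, hcxmem]
  have hu0 : ∀ i, u i ≠ 0 := by
    intro i; fin_cases i <;> simp [hudef, hx0, hcx0]
  have huinj : Injective u := by
    intro i i' h
    simp only [hudef] at h
    fin_cases i <;> fin_cases i' <;> simp at h ⊢ <;>
      first
        | rfl
        | exact absurd h.symm hcxx
        | exact absurd h hcxx
  refine ⟨?_, ?_, ?_, ?_⟩
  · -- first claim
    have hf : Injective (fun i : Fin 2 =>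
        (⟨u i, humem i, hu0 i⟩ : {z : R | z ∈ M ^ (k - 1) ∧ z ≠ 0})) := by
      intro i i' h
      exact huinj (congrArg Subtype.val h)
    have := Nat.card_le_card_of_injective _ hf
    rw [Nat.card_eq_fintype_card, Fintype.card_fin] at this
    exact this
  · -- second claim
    have hf : Injective (fun p : Fin 2 × Fin 3 =>
        (⟨g p.1 + b p.2, hvmem p.1 p.2, hvnot p.1 p.2⟩ :
          {z : R | z ∈ M ^ (k - 2) ∧ z ∉ M ^ (k - 1)})) := by
      rintro ⟨i, j⟩ ⟨i', j'⟩ h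
      obtain ⟨h1, h2⟩ := hvinj i j i' j' (congrArg Subtype.val h)
      simp [h1, h2]
    have := Nat.card_le_card_of_injective _ hf
    rw [Nat.card_eq_fintype_card, Fintype.card_prod, Fintype.card_fin, Fintype.card_fin] at this
    exact this
  · -- third claim
    intro a ha _ v hv _
    exact hann a ha v hv
  · -- the K_{2,3}
    have hadj : ∀ i j, (zdg R).Adj (u i) (g (0 : Fin 2) + b j) := by
      intro i j
      refine ⟨?_, hu0 i, ?_, hann _ (humem i) _ (hvmem 0 j)⟩
      · intro h
        exact hvnot 0 j (h ▸ humem i)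
      · intro h
        exact hvnot 0 j (h ▸ Submodule.zero_mem _)
    have hmap : ∀ {p q : Fin 2 ⊕ Fin 3}, (completeBipartiteGraph (Fin 2) (Fin 3)).Adj p q →
        (zdg R).Adj (Sum.elim (fun i => u i) (fun j => g 0 + b j) p)
          (Sum.elim (fun i => u i) (fun j => g 0 + b j) q) := by
      rintro (i | j) (i' | j') h <;>
        simp only [completeBipartiteGraph, Sum.isLeft_inl, Sum.isRight_inl, Sum.isLeft_inr,
          Sum.isRight_inr] at h
      · simp at h
      · exact hadj i j'
      · exact (hadj i' j).symm
      · simp at h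
    have hinj : Injective (Sum.elim (fun i => u i) (fun j => g 0 + b j) : Fin 2 ⊕ Fin 3 → R) := by
      rintro (i | j) (i' | j') h <;> simp only [Sum.elim_inl, Sum.elim_inr] at h
      · rw [huinj h]
      · exact absurd (h ▸ humem i) (hvnot 0 j')
      · exact absurd (h.symm ▸ humem i') (hvnot 0 j)
      · rw [(hvinj 0 j 0 j' h).2]
    exact ⟨⟨Sum.elim (fun i => u i) (fun j => g 0 + b j), hmap⟩, hinj⟩
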